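/- Discrete entropy dissipation: let (v_K^n, v_{K*}^n, u_{K*}^n) solve the implicit TPFA scheme for the field-road model, and Φ C² convex with Φ(1)=Φ'(1)=0, Φ''>0. Then the discrete entropy H_Φ^n = Σ_K m_K v^∞ Φ(v_K^n/v^∞) + Σ_{K*} m_{K*} u^∞ Φ(u_{K*}^n/u^∞) satisfies (H_Φ^n − H_Φ^{n−1})/δt ≤ −D_Φ^n ≤ 0, where D_Φ^n is the sum over edges of d τ_σ (difference of values)·(difference of Φ' values) for the field and interface edges, D τ_{σ*} analogues on the road, plus μ u^∞ Σ_{K*} m_{K*} (u_{K*}^n/u^∞ − v_{K*}^n/v^∞)(Φ'(u_{K*}^n/u^∞) − Φ'(v_{K*}^n/v^∞)). -/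

import Mathlib

open Finset

private lemma aux_mono (Φ : ℝ → ℝ) (hΦ : ContDiff ℝ 2 Φ)
    (hΦ'' : ∀ s, 0 ≤ s → 0 < iteratedDeriv 2 Φ s) :
    StrictMonoOn (deriv Φ) (Set.Ici 0) := by
  apply strictMonoOn_of_deriv_pos (convex_Ici 0)
  · exact (hΦ.continuous_deriv one_le_two).continuousOn
  · intro x hx
    rw [interior_Ici] at hx
    have h : deriv (deriv Φ) x = iteratedDeriv 2 Φ x := by
      rw [iteratedDeriv_succ, iteratedDeriv_one]
    rw [h]; exact hΦ'' x hx.le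

private lemma aux_grad (Φ : ℝ → ℝ) (hΦ : ContDiff ℝ 2 Φ)
    (mono : StrictMonoOn (deriv Φ) (Set.Ici 0)) (a b : ℝ) (ha : 0 ≤ a) (hb : 0 ≤ b) :
    Φ a - Φ b ≤ deriv Φ a * (a - b) := by
  have hdiff : Differentiable ℝ Φ := hΦ.differentiable (by norm_num)
  rcases lt_trichotomy a b with h | h | h
  · obtain ⟨c, hc, hceq⟩ := exists_deriv_eq_slope Φ h hdiff.continuous.continuousOn
      hdiff.differentiableOn
    have h1 : Φ b - Φ a = deriv Φ c * (b - a) := by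
      rw [eq_div_iff (by linarith : b - a ≠ 0)] at hceq; linarith
    have h2 : deriv Φ a ≤ deriv Φ c :=
      mono.monotoneOn (Set.mem_Ici.2 ha) (Set.mem_Ici.2 (ha.trans hc.1.le)) hc.1.le
    nlinarith
  · simp [h]
  · obtain ⟨c, hc, hceq⟩ := exists_deriv_eq_slope Φ h hdiff.continuous.continuousOn
      hdiff.differentiableOn
    have h1 : Φ a - Φ b = deriv Φ c * (a - b) := by
      rw [eq_div_iff (by linarith : a - b ≠ 0)] at hceq; linarith
    have h2 : deriv Φ c ≤ deriv Φ a :=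
      mono.monotoneOn (Set.mem_Ici.2 (hb.trans hc.1.le)) (Set.mem_Ici.2 ha) hc.2.le
    nlinarith

/-- Discrete entropy dissipation for the implicit TPFA finite volume scheme for the
field-road model. Field cells are indexed by `ι`, road cells by `κ`; `EΩ` is the set of
interior field edges `σ = K|L`, each road cell `K*` is an interface edge `σ = K|K*` with
field neighbour `nb K*`, and `Eω` is the set of road edges `σ* = K*|L*`. For a convex
entropy density `Φ` with `Φ(1) = Φ'(1) = 0` and `Φ'' > 0` on `[0,∞)`, the discrete
relative entropy decreases at rate at least the (nonnegative) discrete dissipation. -/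
theorem discrete_entropy_dissipation
    {ι κ : Type*} [Fintype ι] [Fintype κ] [DecidableEq ι] [DecidableEq κ]
    (EΩ : Finset (ι × ι)) (Eω : Finset (κ × κ)) (nb : κ → ι)
    (mK : ι → ℝ) (mKs : κ → ℝ) (τ : ι × ι → ℝ) (τr : κ → ℝ) (τs : κ × κ → ℝ)
    (dc Dc μ ν δt vinf uinf : ℝ)
    (hmK : ∀ K, 0 < mK K) (hmKs : ∀ Ks, 0 < mKs Ks)
    (hτ : ∀ σ ∈ EΩ, 0 < τ σ) (hτr : ∀ Ks, 0 < τr Ks) (hτs : ∀ σ ∈ Eω, 0 < τs σ)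
    (hdc : 0 < dc) (hDc : 0 < Dc) (hμ : 0 < μ) (hν : 0 < ν) (hδt : 0 < δt)
    (hvinf : 0 < vinf) (huinf : 0 < uinf) (hsteady : ν * vinf = μ * uinf)
    (vprev : ι → ℝ) (uprev : κ → ℝ) (v : ι → ℝ) (vI : κ → ℝ) (u : κ → ℝ)
    (hvprev : ∀ K, 0 ≤ vprev K) (huprev : ∀ Ks, 0 ≤ uprev Ks)
    (hvpos : ∀ K, 0 ≤ v K) (hvIpos : ∀ Ks, 0 ≤ vI Ks) (hupos : ∀ Ks, 0 ≤ u Ks)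
    (hschemev : ∀ K : ι,
      mK K * (v K - vprev K) / δt
        + dc * (∑ σ ∈ EΩ, ((if σ.1 = K then τ σ * (v K - v σ.2) else 0) +
            (if σ.2 = K then τ σ * (v K - v σ.1) else 0)))
        + dc * (∑ Ks : κ, if nb Ks = K then τr Ks * (v K - vI Ks) else 0) = 0)
    (hschemeI : ∀ Ks : κ,
      -dc * (τr Ks * (v (nb Ks) - vI Ks)) = mKs Ks * (μ * u Ks - ν * vI Ks))
    (hschemeu : ∀ Ks : κ,
      mKs Ks * (u Ks - uprev Ks) / δt
        + Dc * (∑ σ ∈ Eω, ((if σ.1 = Ks then τs σ * (u Ks - u σ.2) else 0) +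
            (if σ.2 = Ks then τs σ * (u Ks - u σ.1) else 0)))
        + mKs Ks * (μ * u Ks - ν * vI Ks) = 0)
    (Φ : ℝ → ℝ) (hΦ : ContDiff ℝ 2 Φ) (hΦ1 : Φ 1 = 0) (hΦ'1 : deriv Φ 1 = 0)
    (hΦ'' : ∀ s, 0 ≤ s → 0 < iteratedDeriv 2 Φ s) (hΦ0 : ∀ s, 0 ≤ s → 0 ≤ Φ s) :
    (let Hn := (∑ K : ι, mK K * vinf * Φ (v K / vinf)) +
        ∑ Ks : κ, mKs Ks * uinf * Φ (u Ks / uinf)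
     let Hprev := (∑ K : ι, mK K * vinf * Φ (vprev K / vinf)) +
        ∑ Ks : κ, mKs Ks * uinf * Φ (uprev Ks / uinf)
     let Dn := dc * (∑ Ks : κ, τr Ks * (v (nb Ks) - vI Ks) *
          (deriv Φ (v (nb Ks) / vinf) - deriv Φ (vI Ks / vinf)))
        + dc * (∑ σ ∈ EΩ, τ σ * (v σ.1 - v σ.2) *
          (deriv Φ (v σ.1 / vinf) - deriv Φ (v σ.2 / vinf)))
        + Dc * (∑ σ ∈ Eω, τs σ * (u σ.1 - u σ.2) *
          (deriv Φ (u σ.1 / uinf) - deriv Φ (u σ.2 / uinf)))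
        + μ * uinf * (∑ Ks : κ, mKs Ks * (u Ks / uinf - vI Ks / vinf) *
          (deriv Φ (u Ks / uinf) - deriv Φ (vI Ks / vinf)))
     (Hn - Hprev) / δt ≤ -Dn ∧ 0 ≤ Dn) := by
  have mono := aux_mono Φ hΦ hΦ''
  -- monotonicity product inequality
  have hprod : ∀ a b : ℝ, 0 ≤ a → 0 ≤ b →
      0 ≤ (a - b) * (deriv Φ a - deriv Φ b) := by
    intro a b ha hb
    rcases le_total a b with h | h
    · have hm := mono.monotoneOn (Set.mem_Ici.2 ha) (Set.mem_Ici.2 hb) h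
      nlinarith [mul_nonneg (sub_nonneg.2 h) (sub_nonneg.2 hm)]
    · have hm := mono.monotoneOn (Set.mem_Ici.2 hb) (Set.mem_Ici.2 ha) h
      nlinarith [mul_nonneg (sub_nonneg.2 h) (sub_nonneg.2 hm)]
  have hterm : ∀ (t c x y : ℝ), 0 ≤ t → 0 < c → 0 ≤ x → 0 ≤ y →
      0 ≤ t * (x - y) * (deriv Φ (x / c) - deriv Φ (y / c)) := by
    intro t c x y ht hc hx hy
    have hc' : c ≠ 0 := hc.ne'
    have h := hprod (x / c) (y / c) (div_nonneg hx hc.le) (div_nonneg hy hc.le)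
    have e : t * (x - y) * (deriv Φ (x / c) - deriv Φ (y / c)) =
        (t * c) * ((x / c - y / c) * (deriv Φ (x / c) - deriv Φ (y / c))) := by
      field_simp
    rw [e]; exact mul_nonneg (mul_nonneg ht hc.le) h
  dsimp only
  constructor
  · -- entropy inequality
    rw [div_le_iff₀ hδt]
    -- Step A: convexity bound
    have hA : ((∑ K : ι, mK K * vinf * Φ (v K / vinf)) +
          ∑ Ks : κ, mKs Ks * uinf * Φ (u Ks / uinf)) -
        ((∑ K : ι, mK K * vinf * Φ (vprev K / vinf)) +
          ∑ Ks : κ, mKs Ks * uinf * Φ (uprev Ks / uinf)) ≤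
        (∑ K : ι, deriv Φ (v K / vinf) * (mK K * (v K - vprev K))) +
        ∑ Ks : κ, deriv Φ (u Ks / uinf) * (mKs Ks * (u Ks - uprev Ks)) := by
      have h1 : ∀ K : ι, mK K * vinf * Φ (v K / vinf) - mK K * vinf * Φ (vprev K / vinf)
          ≤ deriv Φ (v K / vinf) * (mK K * (v K - vprev K)) := by
        intro K
        have hg := aux_grad Φ hΦ mono (v K / vinf) (vprev K / vinf)
          (div_nonneg (hvpos K) hvinf.le) (div_nonneg (hvprev K) hvinf.le)
        have hm : (0:ℝ) ≤ mK K * vinf := (mul_pos (hmK K) hvinf).le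
        have h := mul_le_mul_of_nonneg_left hg hm
        have e1 : mK K * vinf * (Φ (v K / vinf) - Φ (vprev K / vinf)) =
            mK K * vinf * Φ (v K / vinf) - mK K * vinf * Φ (vprev K / vinf) := by ring
        have e2 : mK K * vinf * (deriv Φ (v K / vinf) * (v K / vinf - vprev K / vinf)) =
            deriv Φ (v K / vinf) * (mK K * (v K - vprev K)) := by
          field_simp
        linarith [h, e1.ge, e2.le]
      have h2 : ∀ Ks : κ, mKs Ks * uinf * Φ (u Ks / uinf) - mKs Ks * uinf * Φ (uprev Ks / uinf)
          ≤ deriv Φ (u Ks / uinf) * (mKs Ks * (u Ks - uprev Ks)) := by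
        intro Ks
        have hg := aux_grad Φ hΦ mono (u Ks / uinf) (uprev Ks / uinf)
          (div_nonneg (hupos Ks) huinf.le) (div_nonneg (huprev Ks) huinf.le)
        have hm : (0:ℝ) ≤ mKs Ks * uinf := (mul_pos (hmKs Ks) huinf).le
        have h := mul_le_mul_of_nonneg_left hg hm
        have e1 : mKs Ks * uinf * (Φ (u Ks / uinf) - Φ (uprev Ks / uinf)) =
            mKs Ks * uinf * Φ (u Ks / uinf) - mKs Ks * uinf * Φ (uprev Ks / uinf) := by ring
        have e2 : mKs Ks * uinf * (deriv Φ (u Ks / uinf) * (u Ks / uinf - uprev Ks / uinf)) =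
            deriv Φ (u Ks / uinf) * (mKs Ks * (u Ks - uprev Ks)) := by
          field_simp
        linarith [h, e1.ge, e2.le]
      have s1 := Finset.sum_le_sum (s := (Finset.univ : Finset ι)) (fun K _ => h1 K)
      have s2 := Finset.sum_le_sum (s := (Finset.univ : Finset κ)) (fun Ks _ => h2 Ks)
      simp only [Finset.sum_sub_distrib] at s1 s2
      linarith [s1, s2]
    -- Step B: the scheme identity
    have hv' : ∀ K : ι, mK K * (v K - vprev K) =
        (-(dc * (∑ σ ∈ EΩ, ((if σ.1 = K then τ σ * (v K - v σ.2) else 0) +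
            (if σ.2 = K then τ σ * (v K - v σ.1) else 0))))
          - dc * (∑ Ks : κ, if nb Ks = K then τr Ks * (v K - vI Ks) else 0)) * δt := by
      intro K
      have h := hschemev K
      have h2 : mK K * (v K - vprev K) / δt =
          -(dc * (∑ σ ∈ EΩ, ((if σ.1 = K then τ σ * (v K - v σ.2) else 0) +
            (if σ.2 = K then τ σ * (v K - v σ.1) else 0))))
          - dc * (∑ Ks : κ, if nb Ks = K then τr Ks * (v K - vI Ks) else 0) := by linarith
      rw [div_eq_iff hδt.ne'] at h2
      linarith
    have hu' : ∀ Ks : κ, mKs Ks * (u Ks - uprev Ks) =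
        (-(Dc * (∑ σ ∈ Eω, ((if σ.1 = Ks then τs σ * (u Ks - u σ.2) else 0) +
            (if σ.2 = Ks then τs σ * (u Ks - u σ.1) else 0))))
          - mKs Ks * (μ * u Ks - ν * vI Ks)) * δt := by
      intro Ks
      have h := hschemeu Ks
      have h2 : mKs Ks * (u Ks - uprev Ks) / δt =
          -(Dc * (∑ σ ∈ Eω, ((if σ.1 = Ks then τs σ * (u Ks - u σ.2) else 0) +
            (if σ.2 = Ks then τs σ * (u Ks - u σ.1) else 0))))
          - mKs Ks * (μ * u Ks - ν * vI Ks) := by linarith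
      rw [div_eq_iff hδt.ne'] at h2
      linarith
    -- summation by parts identities
    have E1 : ∑ K : ι, deriv Φ (v K / vinf) *
          (∑ σ ∈ EΩ, ((if σ.1 = K then τ σ * (v K - v σ.2) else 0) +
            (if σ.2 = K then τ σ * (v K - v σ.1) else 0))) =
        ∑ σ ∈ EΩ, τ σ * (v σ.1 - v σ.2) *
          (deriv Φ (v σ.1 / vinf) - deriv Φ (v σ.2 / vinf)) := by
      simp only [Finset.mul_sum]
      rw [Finset.sum_comm]
      refine Finset.sum_congr rfl fun σ _ => ?_
      simp only [mul_add, mul_ite, mul_zero, Finset.sum_add_distrib, Finset.sum_ite_eq,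
        Finset.mem_univ, if_true]
      ring
    have E2 : ∑ K : ι, deriv Φ (v K / vinf) *
          (∑ Ks : κ, if nb Ks = K then τr Ks * (v K - vI Ks) else 0) =
        ∑ Ks : κ, τr Ks * (v (nb Ks) - vI Ks) * deriv Φ (v (nb Ks) / vinf) := by
      simp only [Finset.mul_sum]
      rw [Finset.sum_comm]
      refine Finset.sum_congr rfl fun Ks _ => ?_
      simp only [mul_ite, mul_zero, Finset.sum_ite_eq, Finset.mem_univ, if_true]
      ring
    have E3 : ∑ Ks : κ, deriv Φ (u Ks / uinf) *
          (∑ σ ∈ Eω, ((if σ.1 = Ks then τs σ * (u Ks - u σ.2) else 0) +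
            (if σ.2 = Ks then τs σ * (u Ks - u σ.1) else 0))) =
        ∑ σ ∈ Eω, τs σ * (u σ.1 - u σ.2) *
          (deriv Φ (u σ.1 / uinf) - deriv Φ (u σ.2 / uinf)) := by
      simp only [Finset.mul_sum]
      rw [Finset.sum_comm]
      refine Finset.sum_congr rfl fun σ _ => ?_
      simp only [mul_add, mul_ite, mul_zero, Finset.sum_add_distrib, Finset.sum_ite_eq,
        Finset.mem_univ, if_true]
      ring
    -- interface/reaction identity
    have E4 : dc * (∑ Ks : κ, τr Ks * (v (nb Ks) - vI Ks) * deriv Φ (v (nb Ks) / vinf)) +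
          ∑ Ks : κ, mKs Ks * (μ * u Ks - ν * vI Ks) * deriv Φ (u Ks / uinf) =
        dc * (∑ Ks : κ, τr Ks * (v (nb Ks) - vI Ks) *
          (deriv Φ (v (nb Ks) / vinf) - deriv Φ (vI Ks / vinf))) +
        μ * uinf * (∑ Ks : κ, mKs Ks * (u Ks / uinf - vI Ks / vinf) *
          (deriv Φ (u Ks / uinf) - deriv Φ (vI Ks / vinf))) := by
      simp only [Finset.mul_sum]
      rw [← Finset.sum_add_distrib, ← Finset.sum_add_distrib]
      refine Finset.sum_congr rfl fun Ks _ => ?_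
      have e1 := hschemeI Ks
      have e2 : μ * uinf * (vI Ks / vinf) = ν * vI Ks := by
        rw [← hsteady]; field_simp
      have e3 : μ * uinf * (u Ks / uinf) = μ * u Ks := by
        field_simp
      linear_combination (-deriv Φ (vI Ks / vinf)) * e1
        - (mKs Ks * (deriv Φ (u Ks / uinf) - deriv Φ (vI Ks / vinf))) * e3
        + (mKs Ks * (deriv Φ (u Ks / uinf) - deriv Φ (vI Ks / vinf))) * e2
    -- the key identity
    have key : (∑ K : ι, deriv Φ (v K / vinf) * (mK K * (v K - vprev K))) +
        ∑ Ks : κ, deriv Φ (u Ks / uinf) * (mKs Ks * (u Ks - uprev Ks)) =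
        -(dc * (∑ Ks : κ, τr Ks * (v (nb Ks) - vI Ks) *
            (deriv Φ (v (nb Ks) / vinf) - deriv Φ (vI Ks / vinf)))
          + dc * (∑ σ ∈ EΩ, τ σ * (v σ.1 - v σ.2) *
            (deriv Φ (v σ.1 / vinf) - deriv Φ (v σ.2 / vinf)))
          + Dc * (∑ σ ∈ Eω, τs σ * (u σ.1 - u σ.2) *
            (deriv Φ (u σ.1 / uinf) - deriv Φ (u σ.2 / uinf)))
          + μ * uinf * (∑ Ks : κ, mKs Ks * (u Ks / uinf - vI Ks / vinf) *
            (deriv Φ (u Ks / uinf) - deriv Φ (vI Ks / vinf)))) * δt := by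
      rw [Finset.sum_congr rfl fun (K : ι) (_ : K ∈ Finset.univ) => by rw [hv' K],
          Finset.sum_congr rfl fun (Ks : κ) (_ : Ks ∈ Finset.univ) => by rw [hu' Ks]]
      have expand1 : ∑ K : ι, deriv Φ (v K / vinf) *
            ((-(dc * (∑ σ ∈ EΩ, ((if σ.1 = K then τ σ * (v K - v σ.2) else 0) +
              (if σ.2 = K then τ σ * (v K - v σ.1) else 0))))
            - dc * (∑ Ks : κ, if nb Ks = K then τr Ks * (v K - vI Ks) else 0)) * δt) =
          (-(dc * δt)) * (∑ K : ι, deriv Φ (v K / vinf) *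
            (∑ σ ∈ EΩ, ((if σ.1 = K then τ σ * (v K - v σ.2) else 0) +
              (if σ.2 = K then τ σ * (v K - v σ.1) else 0)))) +
          (-(dc * δt)) * (∑ K : ι, deriv Φ (v K / vinf) *
            (∑ Ks : κ, if nb Ks = K then τr Ks * (v K - vI Ks) else 0)) := by
        rw [Finset.mul_sum, Finset.mul_sum, ← Finset.sum_add_distrib]
        exact Finset.sum_congr rfl fun K _ => by ring
      have expand2 : ∑ Ks : κ, deriv Φ (u Ks / uinf) *
            ((-(Dc * (∑ σ ∈ Eω, ((if σ.1 = Ks then τs σ * (u Ks - u σ.2) else 0) +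
              (if σ.2 = Ks then τs σ * (u Ks - u σ.1) else 0))))
            - mKs Ks * (μ * u Ks - ν * vI Ks)) * δt) =
          (-(Dc * δt)) * (∑ Ks : κ, deriv Φ (u Ks / uinf) *
            (∑ σ ∈ Eω, ((if σ.1 = Ks then τs σ * (u Ks - u σ.2) else 0) +
              (if σ.2 = Ks then τs σ * (u Ks - u σ.1) else 0)))) +
          (-δt) * (∑ Ks : κ, mKs Ks * (μ * u Ks - ν * vI Ks) * deriv Φ (u Ks / uinf)) := by
        rw [Finset.mul_sum, Finset.mul_sum, ← Finset.sum_add_distrib]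
        exact Finset.sum_congr rfl fun Ks _ => by ring
      rw [expand1, expand2, E1, E2, E3]
      linear_combination (-δt) * E4
    linarith [hA, key.le, key.ge]
  · -- nonnegativity of dissipation
    have t1 : (0:ℝ) ≤ ∑ Ks : κ, τr Ks * (v (nb Ks) - vI Ks) *
        (deriv Φ (v (nb Ks) / vinf) - deriv Φ (vI Ks / vinf)) :=
      Finset.sum_nonneg fun Ks _ =>
        hterm (τr Ks) vinf (v (nb Ks)) (vI Ks) (hτr Ks).le hvinf (hvpos _) (hvIpos _)
    have t2 : (0:ℝ) ≤ ∑ σ ∈ EΩ, τ σ * (v σ.1 - v σ.2) *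
        (deriv Φ (v σ.1 / vinf) - deriv Φ (v σ.2 / vinf)) :=
      Finset.sum_nonneg fun σ hσ =>
        hterm (τ σ) vinf (v σ.1) (v σ.2) (hτ σ hσ).le hvinf (hvpos _) (hvpos _)
    have t3 : (0:ℝ) ≤ ∑ σ ∈ Eω, τs σ * (u σ.1 - u σ.2) *
        (deriv Φ (u σ.1 / uinf) - deriv Φ (u σ.2 / uinf)) :=
      Finset.sum_nonneg fun σ hσ =>
        hterm (τs σ) uinf (u σ.1) (u σ.2) (hτs σ hσ).le huinf (hupos _) (hupos _)
    have t4 : (0:ℝ) ≤ ∑ Ks : κ, mKs Ks * (u Ks / uinf - vI Ks / vinf) *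
        (deriv Φ (u Ks / uinf) - deriv Φ (vI Ks / vinf)) :=
      Finset.sum_nonneg fun Ks _ => by
        have := hprod (u Ks / uinf) (vI Ks / vinf)
          (div_nonneg (hupos Ks) huinf.le) (div_nonneg (hvIpos Ks) hvinf.le)
        nlinarith [(hmKs Ks).le]
    have := mul_nonneg hdc.le t1
    have := mul_nonneg hdc.le t2
    have := mul_nonneg hDc.le t3
    have := mul_nonneg (mul_nonneg hμ.le huinf.le) t4
    linarith
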